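/- If (σ_n)_{n∈ℕ} are victorious probabilistic trace strategies and (p_n) is a distribution on ℕ, then the countable convex combination ∑_n p_n·σ_n is victorious. -/

import Mathlib

open scoped ENNReal Classical

/-- Active-ending plays over signature `(K, ar)`: alternating sequences of
outputs `k : K` and inputs `i : ar k`. -/
inductive APlay (K : Type) (ar : K → Type) : Type
  | nil : APlay K ar
  | cons (k : K) (i : ar k) (s : APlay K ar) : APlay K ar

variable {K : Type} {ar : K → Type}

/-- Append an output-input pair at the end of an active-ending play. -/
def APlay.snoc : APlay K ar → (k : K) → ar k → APlay K ar
  | .nil, k, i => .cons k i .nil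
  | .cons l j s, k, i => .cons l j (s.snoc k i)

/-- The number of output-input cycles in an active-ending play. -/
def APlay.len : APlay K ar → ℕ
  | .nil => 0
  | .cons _ _ s => s.len + 1

/-- A play-measure: values in `[0,1]` on passive-ending plays (an active play
followed by an output), with `σ_act t = ∑_k σ_pass (t.k)` and
`σ_act (s.k.i) = σ_pass (s.k)`. -/
structure PlayMeasure (K : Type) (ar : K → Type) where
  pass : APlay K ar → K → ℝ≥0∞
  le_one : ∀ t, (∑' k, pass t k) ≤ 1
  consistent : ∀ s k (i : ar k), pass s k = ∑' l, pass (s.snoc k i) l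

/-- The value of a play-measure on an active-ending play. -/
noncomputable def PlayMeasure.act (σ : PlayMeasure K ar) (t : APlay K ar) : ℝ≥0∞ :=
  ∑' k, σ.pass t k

/-- The weight of a play-measure. -/
noncomputable def PlayMeasure.weight (σ : PlayMeasure K ar) : ℝ≥0∞ := σ.act .nil

/-- A partial counterstrategy, given by its set of active-ending plays. -/
structure Counterstrategy (K : Type) (ar : K → Type) where
  act : Set (APlay K ar)
  nil_mem : APlay.nil ∈ act
  prefix_closed : ∀ (s : APlay K ar) (k : K) (i : ar k), s.snoc k i ∈ act → s ∈ act
  deterministic : ∀ (s : APlay K ar) (k : K) (i j : ar k),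
      s.snoc k i ∈ act → s.snoc k j ∈ act → i = j

/-- The passive-ending play `s.k` is a `ρ`-failure: it is in `ρ_pass`
and has no prescribed input. -/
def Counterstrategy.Fails (ρ : Counterstrategy K ar) (s : APlay K ar) (k : K) : Prop :=
  s ∈ ρ.act ∧ ∀ i : ar k, s.snoc k i ∉ ρ.act

/-- `P^m_ρ(σ)`: the sum of `σ_act` over the length-`m` plays in `ρ_act`. -/
noncomputable def contProb (ρ : Counterstrategy K ar) (σ : PlayMeasure K ar) (m : ℕ) : ℝ≥0∞ :=
  ∑' s : {s : APlay K ar // s ∈ ρ.act ∧ s.len = m}, σ.act s.1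

/-- The sum of `σ_pass` over the `ρ`-failures of length `m`. -/
noncomputable def failProb (ρ : Counterstrategy K ar) (σ : PlayMeasure K ar) (m : ℕ) : ℝ≥0∞ :=
  ∑' p : {p : APlay K ar × K // ρ.Fails p.1 p.2 ∧ p.1.len = m}, σ.pass p.1.1 p.1.2

/-- A play-measure is victorious when against every partial counterstrategy,
the probability of play continuing forever is zero. -/
def Victorious (σ : PlayMeasure K ar) : Prop :=
  ∀ ρ : Counterstrategy K ar, (⨅ m, contProb ρ σ m) = 0

/-- The length-`n` prefix of an infinite play. -/
def prefixPlay (f : ℕ → Σ k : K, ar k) : ℕ → APlay K ar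
  | 0 => .nil
  | n + 1 => (prefixPlay f n).snoc (f n).1 (f n).2

/-- A play-measure is well-founded when no infinite play has all its
prefixes in the support. -/
def PlayMeasure.WellFoundedPM (σ : PlayMeasure K ar) : Prop :=
  ¬ ∃ f : ℕ → Σ k : K, ar k, ∀ n, 0 < σ.pass (prefixPlay f n) (f n).1

/-- A play-measure is finitely branching when each active-ending play has
finitely many possible next outputs in the support. -/
def PlayMeasure.FinBranch (σ : PlayMeasure K ar) : Prop :=
  ∀ t : APlay K ar, {k : K | 0 < σ.pass t k}.Finite

/-- Finitely founded: well-founded and finitely branching. -/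
def PlayMeasure.FinFounded (σ : PlayMeasure K ar) : Prop :=
  σ.WellFoundedPM ∧ σ.FinBranch

/-- `f` is uniformly below `g`: there is `d > 0` with `f s + d ≤ g s` on
every passive-ending play `s` in the support of `f`. -/
def UBelow (f g : APlay K ar → K → ℝ≥0∞) : Prop :=
  ∃ d : ℝ≥0∞, 0 < d ∧ ∀ s k, 0 < f s k → f s k + d ≤ g s k


open Filter Topology

lemma aux_len_zero {t : APlay K ar} (h : t.len = 0) : t = .nil := by
  cases t with
  | nil => rfl
  | cons k i s => simp [APlay.len] at h

lemma aux_snoc_ne_nil (s : APlay K ar) (k : K) (i : ar k) : s.snoc k i ≠ .nil := by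
  intro h; cases s <;> simp [APlay.snoc] at h

lemma aux_len_snoc (s : APlay K ar) (k : K) (i : ar k) : (s.snoc k i).len = s.len + 1 := by
  induction s with
  | nil => rfl
  | cons l j r ih => simp [APlay.snoc, APlay.len, ih]

lemma aux_snoc_inj {s s' : APlay K ar} {k k' : K} {i : ar k} {i' : ar k'}
    (h : s.snoc k i = s'.snoc k' i') :
    s = s' ∧ (⟨k, i⟩ : Σ k, ar k) = ⟨k', i'⟩ := by
  induction s generalizing s' with
  | nil =>
    cases s' with
    | nil =>
      simp only [APlay.snoc, APlay.cons.injEq] at h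
      obtain ⟨hk, hi, -⟩ := h
      subst hk
      exact ⟨rfl, by rw [eq_of_heq hi]⟩
    | cons l' j' r' =>
      simp only [APlay.snoc, APlay.cons.injEq] at h
      exact absurd h.2.2.symm (aux_snoc_ne_nil _ _ _)
  | cons l j r ih =>
    cases s' with
    | nil =>
      simp only [APlay.snoc, APlay.cons.injEq] at h
      exact absurd h.2.2 (aux_snoc_ne_nil _ _ _)
    | cons l' j' r' =>
      simp only [APlay.snoc, APlay.cons.injEq] at h
      obtain ⟨hl, hj, hr⟩ := h
      subst hl
      obtain ⟨h1, h2⟩ := ih hr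
      exact ⟨by rw [eq_of_heq hj, h1], h2⟩

lemma aux_exists_snoc : ∀ (t : APlay K ar), t ≠ .nil → ∃ s k i, t = APlay.snoc s k i := by
  intro t
  induction t with
  | nil => intro h; exact absurd rfl h
  | cons k i s ih =>
    intro _
    by_cases hs : s = .nil
    · subst hs; exact ⟨.nil, k, i, rfl⟩
    · obtain ⟨r, l, j, hr⟩ := ih hs
      exact ⟨.cons k i r, l, j, by rw [hr]; rfl⟩

lemma aux_contProb_zero (ρ : Counterstrategy K ar) (σ : PlayMeasure K ar) :
    contProb ρ σ 0 = σ.weight := by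
  unfold contProb
  rw [tsum_eq_single (⟨.nil, ρ.nil_mem, rfl⟩ : {s : APlay K ar // s ∈ ρ.act ∧ s.len = 0})
    (fun x hx => absurd (Subtype.ext (aux_len_zero x.2.2)) hx)]
  rfl

lemma aux_contProb_antitone (ρ : Counterstrategy K ar) (σ : PlayMeasure K ar) :
    Antitone (contProb ρ σ) := by
  apply antitone_nat_of_succ_le
  intro m
  set T := {t : APlay K ar // t ∈ ρ.act ∧ t.len = m + 1}
  set S := {s : APlay K ar // s ∈ ρ.act ∧ s.len = m}
  have key : ∀ t : T, ∃ d : S × K, ∃ i : ar d.2, t.1 = APlay.snoc d.1.1 d.2 i := by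
    rintro ⟨t, ht, hlen⟩
    have hne : t ≠ .nil := by intro h; subst h; simp [APlay.len] at hlen
    obtain ⟨s, k, i, rfl⟩ := aux_exists_snoc t hne
    have hs : s ∈ ρ.act := ρ.prefix_closed s k i ht
    have hl : s.len = m := by rw [aux_len_snoc] at hlen; omega
    exact ⟨(⟨s, hs, hl⟩, k), i, rfl⟩
  choose F I hF using key
  have hinj : Function.Injective F := by
    intro t t' h
    have hx : ∃ i : ar (F t).2, t'.1 = APlay.snoc (F t).1.1 (F t).2 i := by
      rw [h]; exact ⟨I t', hF t'⟩
    obtain ⟨i', he'⟩ := hx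
    have h1 : APlay.snoc (F t).1.1 (F t).2 (I t) ∈ ρ.act := (hF t) ▸ t.2.1
    have h2 : APlay.snoc (F t).1.1 (F t).2 i' ∈ ρ.act := he' ▸ t'.2.1
    have hii := ρ.deterministic _ _ _ _ h1 h2
    apply Subtype.ext
    rw [hF t, he', hii]
  calc contProb ρ σ (m + 1) = ∑' t : T, σ.pass (F t).1.1 (F t).2 := by
        apply tsum_congr
        intro t
        rw [show σ.act t.1 = σ.pass (F t).1.1 (F t).2 by
          rw [hF t]; exact (σ.consistent _ _ _).symm]
    _ ≤ ∑' d : S × K, σ.pass d.1.1 d.2 :=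
        ENNReal.tsum_comp_le_tsum_of_injective hinj (fun d => σ.pass d.1.1 d.2)
    _ = ∑' s : S, σ.act s.1 := by
        rw [ENNReal.tsum_prod (f := fun (s : S) k => σ.pass s.1 k)]
        rfl
    _ = contProb ρ σ m := rfl

/-- The countable convex combination `∑_n p_n·σ_n` of victorious probabilistic
trace strategies is victorious. -/
theorem stmt_7 {K : Type} {ar : K → Type}
    (σ : ℕ → PlayMeasure K ar) (hw : ∀ n, (σ n).weight = 1)
    (hv : ∀ n, Victorious (σ n))
    (p : ℕ → ℝ≥0∞) (hp : (∑' n, p n) = 1)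
    (τ : PlayMeasure K ar)
    (hτ : ∀ s k, τ.pass s k = ∑' n, p n * (σ n).pass s k) :
    Victorious τ := by
  intro ρ
  set b : ℕ → ℕ → ℝ≥0∞ := fun n m => contProb ρ (σ n) m with hbdef
  have hswap : ∀ m, contProb ρ τ m = ∑' n, p n * b n m := by
    intro m
    unfold contProb
    calc (∑' s : {s : APlay K ar // s ∈ ρ.act ∧ s.len = m}, τ.act s.1)
        = ∑' s : {s : APlay K ar // s ∈ ρ.act ∧ s.len = m}, ∑' k, ∑' n, p n * (σ n).pass s.1 k := by
          apply tsum_congr; intro s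
          exact tsum_congr fun k => hτ _ _
      _ = ∑' s : {s : APlay K ar // s ∈ ρ.act ∧ s.len = m}, ∑' n, ∑' k, p n * (σ n).pass s.1 k := by
          exact tsum_congr fun s => ENNReal.tsum_comm
      _ = ∑' n, ∑' s : {s : APlay K ar // s ∈ ρ.act ∧ s.len = m}, ∑' k, p n * (σ n).pass s.1 k :=
          ENNReal.tsum_comm
      _ = ∑' n, p n * b n m := by
          apply tsum_congr; intro n
          rw [show b n m = ∑' s : {s : APlay K ar // s ∈ ρ.act ∧ s.len = m}, (σ n).act s.1 from rfl,
            ← ENNReal.tsum_mul_left]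
          exact tsum_congr fun s => ENNReal.tsum_mul_left
  have hanti : ∀ n, Antitone (b n) := fun n => aux_contProb_antitone ρ (σ n)
  have hinf : ∀ n, (⨅ m, b n m) = 0 := fun n => hv n ρ
  have hone : ∀ n m, b n m ≤ 1 := by
    intro n m
    calc b n m ≤ b n 0 := hanti n (Nat.zero_le m)
      _ = 1 := by rw [show b n 0 = contProb ρ (σ n) 0 from rfl, aux_contProb_zero, hw n]
  have hfin : ∀ N : ℕ, (⨅ m, ∑ n ∈ Finset.range N, p n * b n m) = 0 := by
    intro N
    rw [ENNReal.iInf_sum (f := fun m n => p n * b n m)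
      (fun t i j => ⟨max i j, fun a _ =>
        ⟨mul_le_mul_right (hanti a (le_max_left i j)) _,
         mul_le_mul_right (hanti a (le_max_right i j)) _⟩⟩)]
    apply Finset.sum_eq_zero
    intro n _
    refine le_antisymm ?_ zero_le
    have hp1 : p n ≤ 1 := le_trans (ENNReal.le_tsum n) hp.le
    calc (⨅ m, p n * b n m) ≤ ⨅ m, b n m :=
          iInf_mono fun m => mul_le_of_le_one_left zero_le hp1
      _ = 0 := hinf n
  have key : ∀ N : ℕ, (⨅ m, contProb ρ τ m) ≤ ∑' n, p (n + N) := by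
    intro N
    have hsplit : ∀ m, contProb ρ τ m ≤ (∑ n ∈ Finset.range N, p n * b n m) + ∑' n, p (n + N) := by
      intro m
      rw [hswap m, ← Summable.sum_add_tsum_nat_add' (f := fun n => p n * b n m) (k := N) ENNReal.summable]
      refine add_le_add_right (ENNReal.tsum_le_tsum fun n => ?_) _
      exact mul_le_of_le_one_right zero_le (hone _ m)
    calc (⨅ m, contProb ρ τ m)
        ≤ ⨅ m, ((∑ n ∈ Finset.range N, p n * b n m) + ∑' n, p (n + N)) := iInf_mono hsplit
      _ = (⨅ m, ∑ n ∈ Finset.range N, p n * b n m) + ∑' n, p (n + N) := by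
          rw [← ENNReal.iInf_add_iInf (g := fun _ : ℕ => ∑' n, p (n + N))
            (fun i j => ⟨i, le_refl _⟩), iInf_const]
      _ = ∑' n, p (n + N) := by rw [hfin N, zero_add]
  have htail : Filter.Tendsto (fun N => ∑' n, p (n + N)) Filter.atTop (nhds 0) :=
    ENNReal.tendsto_sum_nat_add p (by rw [hp]; exact ENNReal.one_ne_top)
  exact le_antisymm (ge_of_tendsto' htail key) zero_le
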